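/- Let A ∈ (ℝ ∪ {−∞})^{n×n} have spectral radius λ > −∞, let g ∈ (ℝ ∪ {−∞})ⁿ, and let h ∈ ℝⁿ be a regular vector such that h⁻ g ≤ 𝟙. Set θ = λ ⊕ ⊕_{k=1}^{n} (h⁻ A^k g)^{1/k}. Then the minimum of x⁻ A x over all regular vectors x ∈ ℝⁿ with g ≤ x ≤ h equals θ, and a regular vector x with g ≤ x ≤ h attains this minimum if and only if x = (θ⁻¹ A)* u for some vector u with g ≤ u ≤ (h⁻ (θ⁻¹ A)*)⁻, where θ⁻¹ = −θ. -/

import Mathlib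

open Finset

noncomputable section

namespace MaxPlus

/-- Max-plus multiplicative inverse: `-a` for real `a`, `⊥` for `⊥`. -/
def tinv (a : WithBot ℝ) : WithBot ℝ := WithBot.map (fun r => -r) a

/-- Max-plus rational power `a^(1/k) = a / k`. -/
def trt (a : WithBot ℝ) (k : ℕ) : WithBot ℝ := WithBot.map (fun r => r / (k : ℝ)) a

/-- A vector is regular if it has no `⊥` (= -∞) entries. -/
def Reg {n : ℕ} (x : Fin n → WithBot ℝ) : Prop := ∀ i, x i ≠ ⊥

/-- `cdot q x = q⁻ x`, the max-plus product of the conjugate row vector `q⁻` with `x`. -/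
def cdot {n : ℕ} (q x : Fin n → WithBot ℝ) : WithBot ℝ :=
  Finset.univ.sup fun i => tinv (q i) + x i

/-- Max-plus matrix-vector product. -/
def mulVec {m n : ℕ} (A : Matrix (Fin m) (Fin n) (WithBot ℝ)) (x : Fin n → WithBot ℝ) :
    Fin m → WithBot ℝ := fun i => Finset.univ.sup fun j => A i j + x j

/-- Max-plus matrix product. -/
def tmul {l m n : ℕ} (A : Matrix (Fin l) (Fin m) (WithBot ℝ))
    (B : Matrix (Fin m) (Fin n) (WithBot ℝ)) : Matrix (Fin l) (Fin n) (WithBot ℝ) :=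
  fun i j => Finset.univ.sup fun k => A i k + B k j

/-- Multiplicative conjugate transpose of a matrix. -/
def conjM {m n : ℕ} (A : Matrix (Fin m) (Fin n) (WithBot ℝ)) :
    Matrix (Fin n) (Fin m) (WithBot ℝ) := fun i j => tinv (A j i)

/-- Max-plus identity matrix. -/
def tId {n : ℕ} : Matrix (Fin n) (Fin n) (WithBot ℝ) := fun i j => if i = j then 0 else ⊥

/-- Max-plus matrix power. -/
def tpow {n : ℕ} (A : Matrix (Fin n) (Fin n) (WithBot ℝ)) : ℕ → Matrix (Fin n) (Fin n) (WithBot ℝ)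
  | 0 => tId
  | k + 1 => tmul A (tpow A k)

/-- Max-plus trace. -/
def ttr {n : ℕ} (A : Matrix (Fin n) (Fin n) (WithBot ℝ)) : WithBot ℝ :=
  Finset.univ.sup fun i => A i i

/-- `Tr(A) = tr A ⊕ tr A² ⊕ ⋯ ⊕ tr Aⁿ`. -/
def TrOp {n : ℕ} (A : Matrix (Fin n) (Fin n) (WithBot ℝ)) : WithBot ℝ :=
  (Finset.Icc 1 n).sup fun m => ttr (tpow A m)

/-- Kleene star `A* = I ⊕ A ⊕ ⋯ ⊕ A^(n-1)`. -/
def kstar {n : ℕ} (A : Matrix (Fin n) (Fin n) (WithBot ℝ)) : Matrix (Fin n) (Fin n) (WithBot ℝ) :=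
  fun i j => (Finset.range n).sup fun k => tpow A k i j

/-- Max-plus spectral radius `λ = ⊕_{m=1}^n (tr A^m)^(1/m)`. -/
def specRad {n : ℕ} (A : Matrix (Fin n) (Fin n) (WithBot ℝ)) : WithBot ℝ :=
  (Finset.Icc 1 n).sup fun m => trt (ttr (tpow A m)) m

/-- `prodAB A B [i₁, …, i_k] = A B^{i₁} A B^{i₂} ⋯ A B^{i_k}`. -/
def prodAB {n : ℕ} (A B : Matrix (Fin n) (Fin n) (WithBot ℝ)) :
    List ℕ → Matrix (Fin n) (Fin n) (WithBot ℝ)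
  | [] => tId
  | i :: t => tmul (tmul A (tpow B i)) (prodAB A B t)

/-- The all-ones (all-`𝟙 = 0`) vector. -/
def onesV (n : ℕ) : Fin n → WithBot ℝ := fun _ => 0

end MaxPlus

open MaxPlus


namespace MaxPlus

lemma tinv_bot : tinv ⊥ = ⊥ := rfl
lemma tinv_coe (r : ℝ) : tinv (r : WithBot ℝ) = ((-r : ℝ) : WithBot ℝ) := rfl
lemma trt_bot (k : ℕ) : trt ⊥ k = ⊥ := rfl
lemma trt_coe (r : ℝ) (k : ℕ) : trt (r : WithBot ℝ) k = ((r / k : ℝ) : WithBot ℝ) := rfl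

lemma tadd_sup {ι : Type*} (s : Finset ι) (f : ι → WithBot ℝ) (a : WithBot ℝ) :
    a + s.sup f = s.sup fun i => a + f i := by
  refine Finset.comp_sup_eq_sup_comp (a + ·) (fun x y => ?_) (by simp)
  exact Monotone.map_max (fun u v huv => add_le_add_right huv a)

lemma tsup_add {ι : Type*} (s : Finset ι) (f : ι → WithBot ℝ) (a : WithBot ℝ) :
    s.sup f + a = s.sup fun i => f i + a := by
  rw [add_comm, tadd_sup]
  simp [add_comm]

lemma coe_neg_add_le_iff (r : ℝ) (w c : WithBot ℝ) :
    ((-r : ℝ) : WithBot ℝ) + w ≤ c ↔ w ≤ (r : WithBot ℝ) + c := by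
  induction w using WithBot.recBotCoe with
  | bot => simp
  | coe b =>
    induction c using WithBot.recBotCoe with
    | bot => simp [← WithBot.coe_add]
    | coe c => rw [← WithBot.coe_add, ← WithBot.coe_add]
               exact ⟨fun hh => by have := WithBot.coe_le_coe.1 hh; exact WithBot.coe_le_coe.2 (by linarith),
                      fun hh => by have := WithBot.coe_le_coe.1 hh; exact WithBot.coe_le_coe.2 (by linarith)⟩

lemma coe_cancel_add (r : ℝ) (z : WithBot ℝ) :
    (r : WithBot ℝ) + (((-r : ℝ) : WithBot ℝ) + z) = z := by
  rw [← add_assoc, ← WithBot.coe_add]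
  simp

end MaxPlus
namespace MaxPlus

variable {n : ℕ}

lemma mulVec_tId (x : Fin n → WithBot ℝ) : mulVec tId x = x := by
  funext i
  apply le_antisymm
  · exact Finset.sup_le fun j _ => by
      by_cases hij : i = j
      · subst hij; simp [tId]
      · simp [tId, hij]
  · have := Finset.le_sup (f := fun j => tId i j + x j) (Finset.mem_univ i)
    simpa [tId, mulVec] using this

lemma mulVec_mono_vec {m : ℕ} (A : Matrix (Fin m) (Fin n) (WithBot ℝ))
    {x y : Fin n → WithBot ℝ} (hxy : ∀ j, x j ≤ y j) (i : Fin m) :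
    mulVec A x i ≤ mulVec A y i :=
  Finset.sup_le fun j _ => le_trans (add_le_add_right (hxy j) _)
    (Finset.le_sup (f := fun j => A i j + y j) (Finset.mem_univ j))

lemma mulVec_mono_mat {m : ℕ} {A B : Matrix (Fin m) (Fin n) (WithBot ℝ)}
    (hAB : ∀ i j, A i j ≤ B i j) (x : Fin n → WithBot ℝ) (i : Fin m) :
    mulVec A x i ≤ mulVec B x i :=
  Finset.sup_le fun j _ => le_trans (add_le_add_left (hAB i j) _)
    (Finset.le_sup (f := fun j => B i j + x j) (Finset.mem_univ j))

lemma mulVec_tmul {l m : ℕ} (P : Matrix (Fin l) (Fin m) (WithBot ℝ))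
    (Q : Matrix (Fin m) (Fin n) (WithBot ℝ)) (x : Fin n → WithBot ℝ) :
    mulVec (tmul P Q) x = mulVec P (mulVec Q x) := by
  funext i
  show Finset.univ.sup (fun j => tmul P Q i j + x j)
      = Finset.univ.sup fun k => P i k + mulVec Q x k
  have h1 : ∀ j, tmul P Q i j + x j = Finset.univ.sup fun k => (P i k + Q k j) + x j := by
    intro j; exact tsup_add _ _ _
  have h2 : ∀ k, P i k + mulVec Q x k = Finset.univ.sup fun j => P i k + (Q k j + x j) := by
    intro k; exact tadd_sup _ _ _
  simp only [h1, h2]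
  rw [Finset.sup_comm]
  simp [add_assoc]

lemma mulVec_tpow_succ (A : Matrix (Fin n) (Fin n) (WithBot ℝ)) (k : ℕ)
    (x : Fin n → WithBot ℝ) :
    mulVec (tpow A (k + 1)) x = mulVec A (mulVec (tpow A k) x) := by
  show mulVec (tmul A (tpow A k)) x = _
  rw [mulVec_tmul]

lemma tpow_one (A : Matrix (Fin n) (Fin n) (WithBot ℝ)) : tpow A 1 = A := by
  funext i j
  show Finset.univ.sup (fun k => A i k + tId k j) = A i j
  apply le_antisymm
  · exact Finset.sup_le fun k _ => by
      by_cases hkj : k = j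
      · subst hkj; simp [tId]
      · simp [tId, hkj]
  · have := Finset.le_sup (f := fun k => A i k + tId k j) (Finset.mem_univ j)
    simpa [tId] using this

lemma cdot_le_iff (q x : Fin n → WithBot ℝ) (c : WithBot ℝ) :
    cdot q x ≤ c ↔ ∀ i, tinv (q i) + x i ≤ c := by
  simp [cdot, Finset.sup_le_iff]

lemma le_cdot (q x : Fin n → WithBot ℝ) (i : Fin n) : tinv (q i) + x i ≤ cdot q x :=
  Finset.le_sup (f := fun i => tinv (q i) + x i) (Finset.mem_univ i)

end MaxPlus
namespace MaxPlus

variable {n : ℕ}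

/-- Weight of a walk from `i` to `j` through intermediate vertices `l`. -/
def lw (B : Matrix (Fin n) (Fin n) (WithBot ℝ)) : Fin n → List (Fin n) → Fin n → WithBot ℝ
  | i, [], j => B i j
  | i, k :: l, j => B i k + lw B k l j

lemma lw_append (B : Matrix (Fin n) (Fin n) (WithBot ℝ)) (i x j : Fin n) :
    ∀ (l1 l2 : List (Fin n)), lw B i (l1 ++ x :: l2) j = lw B i l1 x + lw B x l2 j
  | [], l2 => by simp [lw]
  | k :: l1, l2 => by
      show B i k + lw B k (l1 ++ x :: l2) j = (B i k + lw B k l1 x) + lw B x l2 j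
      rw [lw_append B k x j l1 l2, add_assoc]

lemma lw_le_tpow (B : Matrix (Fin n) (Fin n) (WithBot ℝ)) (j : Fin n) :
    ∀ (l : List (Fin n)) (i : Fin n), lw B i l j ≤ tpow B (l.length + 1) i j
  | [], i => by simp [lw, tpow_one]
  | k :: l, i => by
      show B i k + lw B k l j ≤ tpow B (l.length + 1 + 1) i j
      calc B i k + lw B k l j ≤ B i k + tpow B (l.length + 1) k j :=
            add_le_add_right (lw_le_tpow B j l k) _
        _ ≤ _ := Finset.le_sup (f := fun k => B i k + tpow B (l.length + 1) k j)
            (Finset.mem_univ k)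

lemma tpow_eq_sup_lw (B : Matrix (Fin n) (Fin n) (WithBot ℝ)) :
    ∀ (m : ℕ) (i j : Fin n), tpow B (m + 1) i j
      = Finset.univ.sup fun q : Fin m → Fin n => lw B i (List.ofFn q) j := by
  intro m
  induction m with
  | zero =>
    intro i j
    rw [tpow_one]
    rw [Finset.univ_unique, Finset.sup_singleton]
    simp [lw]
  | succ m ih =>
    intro i j
    have step : tpow B (m + 2) i j = Finset.univ.sup fun k => B i k + tpow B (m + 1) k j := rfl
    rw [step]
    have surj : Function.Surjective
        (fun p : Fin n × (Fin m → Fin n) => Fin.cons p.1 p.2 : _ → (Fin (m+1) → Fin n)) := by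
      intro q; exact ⟨⟨q 0, fun i => q i.succ⟩, Fin.cons_self_tail q⟩
    have himg : (Finset.univ.image
        (fun p : Fin n × (Fin m → Fin n) => (Fin.cons p.1 p.2 : Fin (m+1) → Fin n)))
        = Finset.univ := Finset.image_univ_of_surjective surj
    rw [show (Finset.univ.sup fun q : Fin (m+1) → Fin n => lw B i (List.ofFn q) j)
        = Finset.univ.sup ((fun q : Fin (m+1) → Fin n => lw B i (List.ofFn q) j) ∘
          (fun p : Fin n × (Fin m → Fin n) => Fin.cons p.1 p.2)) from by
        rw [← Finset.sup_image, himg]]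
    rw [← Finset.univ_product_univ, Finset.sup_product_left]
    refine Finset.sup_congr rfl fun k _ => ?_
    rw [ih, tadd_sup]
    refine Finset.sup_congr rfl fun q _ => ?_
    simp only [Function.comp]
    rw [List.ofFn_succ]
    simp [lw, Fin.cons_zero, Fin.cons_succ]

lemma exists_dup {α : Type*} : ∀ (l : List α), ¬ l.Nodup →
    ∃ (x : α) (l1 l2 l3 : List α), l = l1 ++ x :: l2 ++ x :: l3
  | [], h => absurd List.nodup_nil h
  | a :: t, h => by
      rw [List.nodup_cons] at h
      push_neg at h
      by_cases ha : a ∈ t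
      · obtain ⟨s, u, rfl⟩ := List.append_of_mem ha
        exact ⟨a, [], s, u, by simp⟩
      · obtain ⟨x, l1, l2, l3, rfl⟩ := exists_dup t (h ha)
        exact ⟨x, a :: l1, l2, l3, by simp⟩

end MaxPlus
namespace MaxPlus

variable {n : ℕ} {B : Matrix (Fin n) (Fin n) (WithBot ℝ)}

lemma ttr_le_of_diag (B : Matrix (Fin n) (Fin n) (WithBot ℝ)) (i : Fin n) :
    B i i ≤ ttr B := Finset.le_sup (f := fun i => B i i) (Finset.mem_univ i)

lemma cycle_le (hc : ∀ m, 1 ≤ m → m ≤ n → ttr (tpow B m) ≤ 0)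
    {x : Fin n} {L : List (Fin n)} (hL : L.length + 1 ≤ n) : lw B x L x ≤ 0 :=
  le_trans (lw_le_tpow B x L x) (le_trans (ttr_le_of_diag _ x)
    (hc _ (Nat.succ_le_succ (Nat.zero_le _)) hL))

lemma splice_step (hc : ∀ m, 1 ≤ m → m ≤ n → ttr (tpow B m) ≤ 0)
    {i x : Fin n} {l L1 L2 D : List (Fin n)}
    (hdec : i :: l = L1 ++ x :: L2 ++ x :: D) (hL2 : L2.length + 1 ≤ n) (j : Fin n) :
    ∃ l', l'.length < l.length ∧ lw B i l j ≤ lw B i l' j := by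
  have hcyc : lw B x L2 x ≤ 0 := cycle_le hc hL2
  cases L1 with
  | nil =>
    simp only [List.nil_append] at hdec
    obtain ⟨rfl, rfl⟩ : i = x ∧ l = L2 ++ x :: D := by
      exact ⟨(List.cons.injEq _ _ _ _ ▸ hdec).1, (List.cons.injEq _ _ _ _ ▸ hdec).2⟩
    refine ⟨D, by simp [List.length_append]; omega, ?_⟩
    rw [lw_append]
    calc lw B i L2 i + lw B i D j ≤ 0 + lw B i D j := add_le_add_left hcyc _
      _ = lw B i D j := zero_add _
  | cons a L1' =>
    rw [List.cons_append] at hdec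
    injection hdec with h1 h2
    subst h1
    subst h2
    refine ⟨L1' ++ x :: D, by simp [List.length_append], ?_⟩
    show lw B i ((L1' ++ x :: L2) ++ (x :: D)) j ≤ lw B i (L1' ++ x :: D) j
    rw [List.append_assoc, List.cons_append, lw_append, lw_append, lw_append]
    calc lw B i L1' x + (lw B x L2 x + lw B x D j)
        ≤ lw B i L1' x + (0 + lw B x D j) :=
          add_le_add_right (add_le_add_left hcyc _) _
      _ = lw B i L1' x + lw B x D j := by rw [zero_add]

lemma kstar_diag_nonneg (hn : 1 ≤ n) (B : Matrix (Fin n) (Fin n) (WithBot ℝ)) (i : Fin n) :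
    0 ≤ kstar B i i := by
  have h0 : tpow B 0 i i = 0 := by simp [tpow, tId]
  calc (0 : WithBot ℝ) = tpow B 0 i i := h0.symm
    _ ≤ _ := Finset.le_sup (f := fun k => tpow B k i i) (Finset.mem_range.2 hn)

lemma lw_le_kstar (hn : 1 ≤ n) (hc : ∀ m, 1 ≤ m → m ≤ n → ttr (tpow B m) ≤ 0) :
    ∀ (N : ℕ) (l : List (Fin n)), l.length ≤ N → ∀ (i j : Fin n), lw B i l j ≤ kstar B i j := by
  intro N
  induction N with
  | zero =>
    intro l hl i j
    have : l = [] := List.length_eq_zero_iff.1 (Nat.le_zero.1 hl)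
    subst this
    by_cases h1 : 1 < n
    · exact le_trans (lw_le_tpow B j [] i)
        (Finset.le_sup (f := fun k => tpow B k i j) (Finset.mem_range.2 h1))
    · -- n = 1, so i = j
      have hn1 : n = 1 := le_antisymm (not_lt.1 h1) hn
      have hij : i = j := by subst hn1; exact Subsingleton.elim i j
      subst hij
      exact le_trans (cycle_le hc (by omega)) (kstar_diag_nonneg hn B i)
  | succ N ih =>
    intro l hl i j
    by_cases hshort : l.length + 1 < n
    · exact le_trans (lw_le_tpow B j l i)
        (Finset.le_sup (f := fun k => tpow B k i j) (Finset.mem_range.2 hshort))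
    push_neg at hshort
    by_cases hbig : n ≤ l.length
    · -- duplicate within the first n+1 vertices
      set t := (i :: l).take (n + 1) with ht
      have hlen : t.length = n + 1 := by
        rw [ht, List.length_take]
        simp; omega
      have hnd : ¬ t.Nodup := by
        intro hnd
        have h2 := hnd.length_le_card
        rw [hlen] at h2
        have h3 : n + 1 ≤ n := by simpa using h2
        omega
      obtain ⟨x, L1, L2, L3, hdec⟩ := exists_dup t hnd
      have hfull : i :: l = L1 ++ x :: L2 ++ x :: (L3 ++ (i :: l).drop (n + 1)) := by
        conv_lhs => rw [← List.take_append_drop (n + 1) (i :: l)]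
        rw [← ht, hdec]
        simp
      have hL2 : L2.length + 1 ≤ n := by
        have := congrArg List.length hdec
        rw [hlen] at this
        simp [List.length_append] at this
        omega
      obtain ⟨l', hlt, hle⟩ := splice_step hc hfull hL2 j
      exact le_trans hle (ih l' (by omega) i j)
    · -- l.length + 1 = n exactly
      push_neg at hbig
      have hexact : l.length + 1 = n := by omega
      by_cases hj : j ∈ l
      · obtain ⟨l1, l2, rfl⟩ := List.append_of_mem hj
        rw [lw_append]
        have hcyc : lw B j l2 j ≤ 0 := cycle_le hc (by
          have := congrArg List.length (rfl : l1 ++ j :: l2 = l1 ++ j :: l2)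
          simp [List.length_append] at hexact ⊢
          omega)
        calc lw B i l1 j + lw B j l2 j ≤ lw B i l1 j + 0 := add_le_add_right hcyc _
          _ = lw B i l1 j := add_zero _
          _ ≤ kstar B i j := ih l1 (by simp [List.length_append] at hexact ⊢; omega) i j
      · by_cases hij : i = j
        · subst hij
          exact le_trans (le_trans (lw_le_tpow B i l i)
            (le_trans (ttr_le_of_diag _ i) (hc _ (by omega) (by omega))))
            (kstar_diag_nonneg hn B i)
        · by_cases hnd : (i :: l).Nodup
          · exfalso
            have hcard : (i :: l).toFinset.card = n := by
              rw [List.toFinset_card_of_nodup hnd]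
              simpa using hexact
            have huniv : (i :: l).toFinset = Finset.univ :=
              Finset.eq_univ_of_card _ (by rw [hcard]; simp)
            have : j ∈ (i :: l).toFinset := huniv ▸ Finset.mem_univ j
            rw [List.mem_toFinset, List.mem_cons] at this
            rcases this with h | h
            · exact hij h.symm
            · exact hj h
          · obtain ⟨x, L1, L2, L3, hdec⟩ := exists_dup _ hnd
            have hL2 : L2.length + 1 ≤ n := by
              have := congrArg List.length hdec
              simp [List.length_append] at this
              omega
            obtain ⟨l', hlt, hle⟩ := splice_step hc hdec hL2 j
            exact le_trans hle (ih l' (by omega) i j)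

lemma tpow_le_kstar (hn : 1 ≤ n) (hc : ∀ m, 1 ≤ m → m ≤ n → ttr (tpow B m) ≤ 0)
    (m : ℕ) (i j : Fin n) : tpow B (m + 1) i j ≤ kstar B i j := by
  rw [tpow_eq_sup_lw]
  exact Finset.sup_le fun q _ => lw_le_kstar hn hc _ _ (le_refl _) i j

lemma tmul_kstar_le (hn : 1 ≤ n) (hc : ∀ m, 1 ≤ m → m ≤ n → ttr (tpow B m) ≤ 0)
    (i j : Fin n) : tmul B (kstar B) i j ≤ kstar B i j := by
  refine Finset.sup_le fun k _ => ?_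
  show B i k + kstar B k j ≤ _
  rw [show kstar B k j = (Finset.range n).sup fun r => tpow B r k j from rfl, tadd_sup]
  refine Finset.sup_le fun r _ => ?_
  calc B i k + tpow B r k j
      ≤ Finset.univ.sup (fun k' => B i k' + tpow B r k' j) :=
        Finset.le_sup (f := fun k' => B i k' + tpow B r k' j) (Finset.mem_univ k)
    _ = tpow B (r + 1) i j := rfl
    _ ≤ kstar B i j := tpow_le_kstar hn hc r i j

end MaxPlus
namespace MaxPlus

variable {n : ℕ}

/-- Iterated max-plus "power": `rep k v = k·v` tropically. -/
def rep : ℕ → WithBot ℝ → WithBot ℝ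
  | 0, _ => 0
  | k + 1, v => v + rep k v

lemma rep_coe (k : ℕ) (r : ℝ) : rep k (r : WithBot ℝ) = (((k : ℝ) * r : ℝ) : WithBot ℝ) := by
  induction k with
  | zero => simp [rep]
  | succ k ih => rw [rep, ih, ← WithBot.coe_add]; rw [show r + (k:ℝ)*r = ((k:ℝ)+1)*r by ring]; push_cast; ring_nf

lemma rep_bot (k : ℕ) (hk : 1 ≤ k) : rep k (⊥ : WithBot ℝ) = ⊥ := by
  cases k with
  | zero => omega
  | succ k => rw [rep]; exact WithBot.bot_add _

lemma trt_le_of_le_rep {k : ℕ} (hk : 1 ≤ k) {a v : WithBot ℝ} (h : a ≤ rep k v) :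
    trt a k ≤ v := by
  induction a using WithBot.recBotCoe with
  | bot => simp [trt_bot]
  | coe r =>
    induction v using WithBot.recBotCoe with
    | bot => rw [rep_bot k hk] at h; exact absurd h (by simp)
    | coe v =>
      rw [rep_coe, WithBot.coe_le_coe] at h
      rw [trt_coe, WithBot.coe_le_coe]
      have hk' : (0 : ℝ) < k := by exact_mod_cast hk
      rw [div_le_iff₀ hk']
      linarith

lemma le_rep_of_trt_le {k : ℕ} (hk : 1 ≤ k) {a : WithBot ℝ} {t : ℝ}
    (h : trt a k ≤ (t : WithBot ℝ)) : a ≤ (((k : ℝ) * t : ℝ) : WithBot ℝ) := by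
  induction a using WithBot.recBotCoe with
  | bot => simp
  | coe r =>
    rw [trt_coe, WithBot.coe_le_coe] at h
    rw [WithBot.coe_le_coe]
    have hk' : (0 : ℝ) < k := by exact_mod_cast hk
    rw [div_le_iff₀ hk'] at h
    linarith

lemma neg_coe_cancel_add (r : ℝ) (z : WithBot ℝ) :
    ((-r : ℝ) : WithBot ℝ) + ((r : WithBot ℝ) + z) = z := by
  have := coe_cancel_add (-r) z
  rw [neg_neg] at this
  exact this

lemma tinv_anti {a b : WithBot ℝ} (ha : a ≠ ⊥) (h : a ≤ b) : tinv b ≤ tinv a := by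
  obtain ⟨r, hr⟩ := WithBot.ne_bot_iff_exists.1 ha
  induction b using WithBot.recBotCoe with
  | bot => exact absurd h (by rw [← hr]; simp)
  | coe s =>
    rw [← hr, tinv_coe, tinv_coe, WithBot.coe_le_coe]
    exact neg_le_neg (WithBot.coe_le_coe.1 (hr ▸ h))

lemma cdot_mono_right {q y z : Fin n → WithBot ℝ} (h : ∀ i, y i ≤ z i) :
    cdot q y ≤ cdot q z :=
  Finset.sup_le fun i _ => le_trans (add_le_add_right (h i) _) (le_cdot q z i)

lemma cdot_anti_left {p q y : Fin n → WithBot ℝ} (hq : Reg q) (h : ∀ i, q i ≤ p i) :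
    cdot p y ≤ cdot q y :=
  Finset.sup_le fun i _ => le_trans (add_le_add_left (tinv_anti (hq i) (h i)) _) (le_cdot q y i)

lemma ttr_le_cdot (M : Matrix (Fin n) (Fin n) (WithBot ℝ)) (x : Fin n → WithBot ℝ)
    (hx : Reg x) : ttr M ≤ cdot x (mulVec M x) := by
  refine Finset.sup_le fun i _ => ?_
  obtain ⟨r, hr⟩ := WithBot.ne_bot_iff_exists.1 (hx i)
  have key : M i i = tinv (x i) + (M i i + x i) := by
    rw [← hr, tinv_coe, add_comm (M i i) _, neg_coe_cancel_add]
  calc M i i = tinv (x i) + (M i i + x i) := key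
    _ ≤ tinv (x i) + mulVec M x i :=
      add_le_add_right (Finset.le_sup (f := fun j => M i j + x j) (Finset.mem_univ i)) _
    _ ≤ cdot x (mulVec M x) := le_cdot x _ i

lemma cdot_mulVec_mulVec (M P : Matrix (Fin n) (Fin n) (WithBot ℝ))
    (x : Fin n → WithBot ℝ) (hx : Reg x) :
    cdot x (mulVec M (mulVec P x)) ≤ cdot x (mulVec M x) + cdot x (mulVec P x) := by
  refine Finset.sup_le fun i _ => ?_
  have hstep : mulVec M (mulVec P x) i ≤ mulVec M x i + cdot x (mulVec P x) := by
    refine Finset.sup_le fun j _ => ?_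
    obtain ⟨r, hr⟩ := WithBot.ne_bot_iff_exists.1 (hx j)
    have key : mulVec P x j = x j + (tinv (x j) + mulVec P x j) := by
      rw [← hr, tinv_coe, coe_cancel_add]
    calc M i j + mulVec P x j
        = M i j + (x j + (tinv (x j) + mulVec P x j)) := by rw [← key]
      _ ≤ M i j + (x j + cdot x (mulVec P x)) :=
          add_le_add_right (add_le_add_right (le_cdot x _ j) _) _
      _ = (M i j + x j) + cdot x (mulVec P x) := by rw [add_assoc]
      _ ≤ mulVec M x i + cdot x (mulVec P x) :=
          add_le_add_left (Finset.le_sup (f := fun j => M i j + x j) (Finset.mem_univ j)) _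
  calc tinv (x i) + mulVec M (mulVec P x) i
      ≤ tinv (x i) + (mulVec M x i + cdot x (mulVec P x)) := add_le_add_right hstep _
    _ = (tinv (x i) + mulVec M x i) + cdot x (mulVec P x) := by rw [add_assoc]
    _ ≤ cdot x (mulVec M x) + cdot x (mulVec P x) := add_le_add_left (le_cdot x _ i) _

lemma cdot_tpow_le_rep (M : Matrix (Fin n) (Fin n) (WithBot ℝ)) (x : Fin n → WithBot ℝ)
    (hx : Reg x) : ∀ k, cdot x (mulVec (tpow M (k + 1)) x) ≤ rep (k + 1) (cdot x (mulVec M x)) := by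
  intro k
  induction k with
  | zero => rw [tpow_one]; show _ ≤ cdot x (mulVec M x) + rep 0 _
            rw [show rep 0 (cdot x (mulVec M x)) = 0 from rfl, add_zero]
  | succ k ih =>
    rw [mulVec_tpow_succ]
    calc cdot x (mulVec M (mulVec (tpow M (k + 1)) x))
        ≤ cdot x (mulVec M x) + cdot x (mulVec (tpow M (k + 1)) x) :=
          cdot_mulVec_mulVec M _ x hx
      _ ≤ cdot x (mulVec M x) + rep (k + 1) (cdot x (mulVec M x)) := add_le_add_right ih _
      _ = rep (k + 2) (cdot x (mulVec M x)) := rfl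

/- Shifting lemmas: multiplying the matrix by a scalar `c`. -/

lemma tpow_shift (A : Matrix (Fin n) (Fin n) (WithBot ℝ)) (c : ℝ) :
    ∀ (k : ℕ) (i j : Fin n), tpow (fun a b => (c : WithBot ℝ) + A a b) k i j
      = (((k : ℝ) * c : ℝ) : WithBot ℝ) + tpow A k i j := by
  intro k
  induction k with
  | zero => intro i j; simp [tpow]
  | succ k ih =>
    intro i j
    show (Finset.univ.sup fun l => ((c : WithBot ℝ) + A i l)
        + tpow (fun a b => (c : WithBot ℝ) + A a b) k l j) = _
    have e1 : ∀ l : Fin n, ((c : WithBot ℝ) + A i l)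
        + tpow (fun a b => (c : WithBot ℝ) + A a b) k l j
        = ((((k : ℝ) + 1) * c : ℝ) : WithBot ℝ) + (A i l + tpow A k l j) := by
      intro l
      rw [ih l j]
      rw [show ((((k : ℝ) + 1) * c : ℝ) : WithBot ℝ)
          = (c : WithBot ℝ) + (((k : ℝ) * c : ℝ) : WithBot ℝ) from by
        rw [← WithBot.coe_add]; congr 1; ring]
      rw [add_assoc, add_assoc]
      congr 1
      rw [← add_assoc, add_comm (A i l) _, add_assoc]
    simp only [e1]
    rw [← tadd_sup Finset.univ (fun l => A i l + tpow A k l j)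
      ((((k : ℝ) + 1) * c : ℝ) : WithBot ℝ)]
    have : tpow A (k + 1) i j = Finset.univ.sup fun l => A i l + tpow A k l j := rfl
    rw [this]
    congr 1
    push_cast
    ring_nf

lemma ttr_shift (A : Matrix (Fin n) (Fin n) (WithBot ℝ)) (c : ℝ) (k : ℕ) :
    ttr (tpow (fun a b => (c : WithBot ℝ) + A a b) k)
      = (((k : ℝ) * c : ℝ) : WithBot ℝ) + ttr (tpow A k) := by
  show (Finset.univ.sup fun i => tpow (fun a b => (c : WithBot ℝ) + A a b) k i i)
      = (((k : ℝ) * c : ℝ) : WithBot ℝ) + Finset.univ.sup fun i => tpow A k i i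
  rw [tadd_sup]
  exact Finset.sup_congr rfl fun i _ => tpow_shift A c k i i

lemma mulVec_shift {m : ℕ} (M : Matrix (Fin m) (Fin n) (WithBot ℝ)) (c : ℝ)
    (x : Fin n → WithBot ℝ) (i : Fin m) :
    mulVec (fun a b => (c : WithBot ℝ) + M a b) x i = (c : WithBot ℝ) + mulVec M x i := by
  show (Finset.univ.sup fun j => ((c : WithBot ℝ) + M i j) + x j)
      = (c : WithBot ℝ) + Finset.univ.sup fun j => M i j + x j
  rw [tadd_sup]
  exact Finset.sup_congr rfl fun j _ => (add_assoc _ _ _)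

lemma cdot_shift (q : Fin n → WithBot ℝ) (c : ℝ) (y : Fin n → WithBot ℝ) :
    cdot q (fun i => (c : WithBot ℝ) + y i) = (c : WithBot ℝ) + cdot q y := by
  show (Finset.univ.sup fun i => tinv (q i) + ((c : WithBot ℝ) + y i))
      = (c : WithBot ℝ) + Finset.univ.sup fun i => tinv (q i) + y i
  rw [tadd_sup]
  refine Finset.sup_congr rfl fun i _ => ?_
  rw [← add_assoc, add_comm (tinv (q i)) _, add_assoc]

end MaxPlus
namespace MaxPlus

lemma mulVec_kstar {n : ℕ} (B : Matrix (Fin n) (Fin n) (WithBot ℝ)) (u : Fin n → WithBot ℝ)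
    (i : Fin n) :
    mulVec (kstar B) u i = (Finset.range n).sup fun k => mulVec (tpow B k) u i := by
  show (Finset.univ.sup fun j => kstar B i j + u j) = _
  have e : ∀ j, kstar B i j + u j = (Finset.range n).sup fun k => tpow B k i j + u j :=
    fun j => tsup_add _ _ _
  simp only [e]
  rw [Finset.sup_comm]
  exact Finset.sup_congr rfl fun k _ => rfl

lemma add_coe_le_zero_iff (c : ℝ) (w : WithBot ℝ) :
    w + (c : WithBot ℝ) ≤ 0 ↔ w ≤ ((-c : ℝ) : WithBot ℝ) := by
  rw [add_comm]
  have := coe_neg_add_le_iff (-c) w 0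
  rw [neg_neg] at this
  rw [this, add_zero]

lemma shift_le_helper (hr c : ℝ) (w : WithBot ℝ) (h : w + (c : WithBot ℝ) ≤ (hr : WithBot ℝ)) :
    ((-hr : ℝ) : WithBot ℝ) + w ≤ ((-c : ℝ) : WithBot ℝ) := by
  induction w using WithBot.recBotCoe with
  | bot => simp
  | coe b =>
    rw [← WithBot.coe_add, WithBot.coe_le_coe] at h ⊢
    linarith

end MaxPlus
/-- minimization of `x⁻ A x` subject to `g ≤ x ≤ h`. -/
theorem stmt_14 {n : ℕ} (A : Matrix (Fin n) (Fin n) (WithBot ℝ))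
    (hlam : ⊥ < specRad A)
    (g : Fin n → WithBot ℝ) (h : Fin n → WithBot ℝ) (hh : Reg h)
    (hhg : cdot h g ≤ 0)
    (θ : WithBot ℝ)
    (hθ : θ = specRad A
        ⊔ (Finset.Icc 1 n).sup fun k => trt (cdot h (mulVec (tpow A k) g)) k) :
    IsLeast {v | ∃ x : Fin n → WithBot ℝ, Reg x ∧ (∀ i, g i ≤ x i ∧ x i ≤ h i) ∧
        cdot x (mulVec A x) = v} θ ∧
      ∀ x : Fin n → WithBot ℝ, Reg x → (∀ i, g i ≤ x i ∧ x i ≤ h i) →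
        (cdot x (mulVec A x) = θ ↔
          ∃ u : Fin n → WithBot ℝ,
            x = mulVec (kstar fun a b => tinv θ + A a b) u ∧
            ∀ j, g j ≤ u j ∧
              u j ≤ tinv (Finset.univ.sup fun r =>
                tinv (h r) + kstar (fun a b => tinv θ + A a b) r j)) := by
  -- basic setup
  have hn : 1 ≤ n := by
    by_contra hn0
    have hn0' : n = 0 := by omega
    subst hn0'
    simp [specRad] at hlam
  have hspec : specRad A ≤ θ := by rw [hθ]; exact le_sup_left
  have hθbot : θ ≠ ⊥ := by
    intro hb
    rw [hb, le_bot_iff] at hspec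
    rw [hspec] at hlam
    exact lt_irrefl _ hlam
  obtain ⟨t, ht⟩ := WithBot.ne_bot_iff_exists.1 hθbot
  set B : Matrix (Fin n) (Fin n) (WithBot ℝ) := fun a b => tinv θ + A a b with hBdef
  have hBfun : B = fun a b => ((-t : ℝ) : WithBot ℝ) + A a b := by
    funext a b
    rw [hBdef, ← ht]
    rfl
  have hsup2 : ∀ k, 1 ≤ k → k ≤ n →
      cdot h (mulVec (tpow A k) g) ≤ (((k : ℝ) * t : ℝ) : WithBot ℝ) := by
    intro k h1 h2
    have htrt : trt (cdot h (mulVec (tpow A k) g)) k ≤ θ := by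
      rw [hθ]
      exact le_sup_of_le_right (Finset.le_sup (f := fun k => trt (cdot h (mulVec (tpow A k) g)) k) (Finset.mem_Icc.2 ⟨h1, h2⟩))
    rw [← ht] at htrt
    exact le_rep_of_trt_le h1 htrt
  -- cycle condition for B
  have hc : ∀ m, 1 ≤ m → m ≤ n → ttr (tpow B m) ≤ 0 := by
    intro m h1 h2
    have htrt : trt (ttr (tpow A m)) m ≤ θ :=
      le_trans (Finset.le_sup (f := fun m => trt (ttr (tpow A m)) m)
        (Finset.mem_Icc.2 ⟨h1, h2⟩)) hspec
    rw [← ht] at htrt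
    have hA : ttr (tpow A m) ≤ (((m : ℝ) * t : ℝ) : WithBot ℝ) := le_rep_of_trt_le h1 htrt
    rw [hBfun, ttr_shift]
    calc (((m : ℝ) * (-t) : ℝ) : WithBot ℝ) + ttr (tpow A m)
        ≤ (((m : ℝ) * (-t) : ℝ) : WithBot ℝ) + (((m : ℝ) * t : ℝ) : WithBot ℝ) :=
          add_le_add_right hA _
      _ = ((0 : ℝ) : WithBot ℝ) := by rw [← WithBot.coe_add]; congr 1; ring
      _ = 0 := WithBot.coe_zero
  -- lower bound
  have LB : ∀ x, Reg x → (∀ i, g i ≤ x i ∧ x i ≤ h i) → θ ≤ cdot x (mulVec A x) := by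
    intro x hx hgh
    rw [hθ]
    refine sup_le ?_ ?_
    · refine Finset.sup_le fun m hm => ?_
      rw [Finset.mem_Icc] at hm
      obtain ⟨m', rfl⟩ : ∃ m', m = m' + 1 := ⟨m - 1, by omega⟩
      exact trt_le_of_le_rep (by omega)
        (le_trans (ttr_le_cdot (tpow A (m' + 1)) x hx) (cdot_tpow_le_rep A x hx m'))
    · refine Finset.sup_le fun k hk => ?_
      rw [Finset.mem_Icc] at hk
      obtain ⟨k', rfl⟩ : ∃ k', k = k' + 1 := ⟨k - 1, by omega⟩
      refine trt_le_of_le_rep (by omega) ?_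
      calc cdot h (mulVec (tpow A (k' + 1)) g)
          ≤ cdot x (mulVec (tpow A (k' + 1)) g) := cdot_anti_left hx (fun i => (hgh i).2)
        _ ≤ cdot x (mulVec (tpow A (k' + 1)) x) :=
            cdot_mono_right (fun i => mulVec_mono_vec _ (fun j => (hgh j).1) i)
        _ ≤ rep (k' + 1) (cdot x (mulVec A x)) := cdot_tpow_le_rep A x hx k'
  -- equivalence: subeigenvector vs cdot bound
  have hEquiv : ∀ x : Fin n → WithBot ℝ, Reg x →
      ((∀ i, mulVec B x i ≤ x i) ↔ cdot x (mulVec A x) ≤ θ) := by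
    intro x hx
    rw [cdot_le_iff]
    refine forall_congr' fun i => ?_
    obtain ⟨r, hr⟩ := WithBot.ne_bot_iff_exists.1 (hx i)
    have hBx : mulVec B x i = ((-t : ℝ) : WithBot ℝ) + mulVec A x i := by
      rw [hBfun]; exact mulVec_shift A (-t) x i
    rw [hBx, ← hr, ← ht, tinv_coe]
    rw [coe_neg_add_le_iff t (mulVec A x i) ((r : ℝ) : WithBot ℝ)]
    rw [coe_neg_add_le_iff r (mulVec A x i) ((t : ℝ) : WithBot ℝ)]
    rw [← WithBot.coe_add, ← WithBot.coe_add, add_comm t r]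
  -- B (B* u) ≤ B* u
  have hXle : ∀ (u : Fin n → WithBot ℝ) (i : Fin n),
      mulVec B (mulVec (kstar B) u) i ≤ mulVec (kstar B) u i := by
    intro u i
    rw [← mulVec_tmul]
    exact mulVec_mono_mat (tmul_kstar_le hn hc) u i
  -- fixed point
  have hFix : ∀ x : Fin n → WithBot ℝ, (∀ i, mulVec B x i ≤ x i) →
      mulVec (kstar B) x = x := by
    intro x hBx
    have pow_le : ∀ k i, mulVec (tpow B k) x i ≤ x i := by
      intro k
      induction k with
      | zero => intro i; rw [show tpow B 0 = tId from rfl, mulVec_tId]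
      | succ k ih =>
        intro i
        rw [mulVec_tpow_succ]
        exact le_trans (mulVec_mono_vec B ih i) (hBx i)
    funext i
    rw [mulVec_kstar]
    refine le_antisymm (Finset.sup_le fun k _ => pow_le k i) ?_
    have h0 : mulVec (tpow B 0) x i = x i := by
      rw [show tpow B 0 = tId from rfl, mulVec_tId]
    exact h0 ▸ Finset.le_sup (f := fun k => mulVec (tpow B k) x i) (Finset.mem_range.2 hn)
  -- the "top" vector
  set s : Fin n → WithBot ℝ :=
    fun j => Finset.univ.sup fun r => tinv (h r) + kstar B r j with hsdef
  have hsreal : ∀ j, ∃ sv : ℝ, s j = (sv : WithBot ℝ) := by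
    intro j
    obtain ⟨hj, hhj⟩ := WithBot.ne_bot_iff_exists.1 (hh j)
    have h1 : ((-hj : ℝ) : WithBot ℝ) ≤ s j := by
      calc ((-hj : ℝ) : WithBot ℝ) = tinv (h j) + 0 := by rw [← hhj, tinv_coe, add_zero]
        _ ≤ tinv (h j) + kstar B j j := add_le_add_right (kstar_diag_nonneg hn B j) _
        _ ≤ s j := Finset.le_sup (f := fun r => tinv (h r) + kstar B r j) (Finset.mem_univ j)
    have hne : s j ≠ ⊥ := by
      intro hb
      rw [hb, le_bot_iff] at h1
      exact WithBot.coe_ne_bot h1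
    obtain ⟨sv, hsv⟩ := WithBot.ne_bot_iff_exists.1 hne
    exact ⟨sv, hsv.symm⟩
  set u0 : Fin n → WithBot ℝ := fun j => tinv (s j) with hu0def
  -- the key entrywise inequality h⁻ (B* g) ≤ 0
  have HE : ∀ (r j : Fin n), tinv (h r) + (kstar B r j + g j) ≤ 0 := by
    intro r j
    have hk : ∀ k, k < n → tinv (h r) + (tpow B k r j + g j) ≤ 0 := by
      intro k hkn
      cases k with
      | zero =>
        by_cases hrj : r = j
        · subst hrj
          have : tpow B 0 r r + g r = g r := by
            rw [show tpow B 0 = tId from rfl]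
            simp [tId]
          rw [this]
          exact (cdot_le_iff h g 0).1 hhg r
        · have : tpow B 0 r j = ⊥ := by rw [show tpow B 0 = tId from rfl]; simp [tId, hrj]
          rw [this, WithBot.bot_add]
          simp
      | succ k =>
        have hshift : tpow B (k + 1) r j
            = ((((k + 1 : ℕ) : ℝ) * (-t) : ℝ) : WithBot ℝ) + tpow A (k + 1) r j := by
          rw [hBfun]; exact tpow_shift A (-t) (k + 1) r j
        rw [hshift]
        have e1 : tinv (h r) + ((((((k + 1 : ℕ) : ℝ) * (-t) : ℝ)) : WithBot ℝ)
              + tpow A (k + 1) r j + g j)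
            = ((((k + 1 : ℕ) : ℝ) * (-t) : ℝ) : WithBot ℝ)
              + (tinv (h r) + (tpow A (k + 1) r j + g j)) := by
          rw [add_assoc ((((((k + 1 : ℕ) : ℝ) * (-t) : ℝ)) : WithBot ℝ)) _ _]
          rw [← add_assoc (tinv (h r)) _ _, add_comm (tinv (h r)) _, add_assoc]
        rw [e1]
        have hb : tinv (h r) + (tpow A (k + 1) r j + g j)
            ≤ ((((k + 1 : ℕ) : ℝ) * t : ℝ) : WithBot ℝ) := by
          calc tinv (h r) + (tpow A (k + 1) r j + g j)
              ≤ tinv (h r) + mulVec (tpow A (k + 1)) g r :=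
                add_le_add_right (Finset.le_sup (f := fun j => tpow A (k + 1) r j + g j)
                  (Finset.mem_univ j)) _
            _ ≤ cdot h (mulVec (tpow A (k + 1)) g) := le_cdot h _ r
            _ ≤ _ := hsup2 (k + 1) (by omega) (by omega)
        calc ((((k + 1 : ℕ) : ℝ) * (-t) : ℝ) : WithBot ℝ)
              + (tinv (h r) + (tpow A (k + 1) r j + g j))
            ≤ ((((k + 1 : ℕ) : ℝ) * (-t) : ℝ) : WithBot ℝ)
              + ((((k + 1 : ℕ) : ℝ) * t : ℝ) : WithBot ℝ) := add_le_add_right hb _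
          _ = ((0 : ℝ) : WithBot ℝ) := by rw [← WithBot.coe_add]; congr 1; ring
          _ = 0 := WithBot.coe_zero
    have e2 : kstar B r j + g j = (Finset.range n).sup fun k => tpow B k r j + g j :=
      tsup_add _ _ _
    rw [e2, tadd_sup]
    exact Finset.sup_le fun k hkn => hk k (Finset.mem_range.1 hkn)
  -- g ≤ u0
  have hgu0 : ∀ j, g j ≤ u0 j := by
    intro j
    by_cases hgb : g j = ⊥
    · rw [hgb]; exact bot_le
    · obtain ⟨c, hgj⟩ := WithBot.ne_bot_iff_exists.1 hgb
      obtain ⟨sv, hsv⟩ := hsreal j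
      rw [hu0def, ← hgj]
      show ((c : ℝ) : WithBot ℝ) ≤ tinv (s j)
      rw [hsv, tinv_coe, WithBot.coe_le_coe]
      have hsle : s j ≤ ((-c : ℝ) : WithBot ℝ) := by
        rw [hsdef]
        refine Finset.sup_le fun r _ => ?_
        have hrj := HE r j
        rw [← hgj, ← add_assoc] at hrj
        exact (add_coe_le_zero_iff c _).1 hrj
      rw [hsv, WithBot.coe_le_coe] at hsle
      linarith
  -- u0 is regular
  have hu0reg : Reg u0 := by
    intro j
    obtain ⟨sv, hsv⟩ := hsreal j
    rw [hu0def]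
    show tinv (s j) ≠ ⊥
    rw [hsv, tinv_coe]
    exact WithBot.coe_ne_bot
  -- x0 := B* u0
  set x0 : Fin n → WithBot ℝ := mulVec (kstar B) u0 with hx0def
  have hu0x0 : ∀ j, u0 j ≤ x0 j := by
    intro j
    calc u0 j = 0 + u0 j := (zero_add _).symm
      _ ≤ kstar B j j + u0 j := add_le_add_left (kstar_diag_nonneg hn B j) _
      _ ≤ x0 j := Finset.le_sup (f := fun r => kstar B j r + u0 r) (Finset.mem_univ j)
  have hx0reg : Reg x0 := fun j hb => hu0reg j (le_bot_iff.1 (hb ▸ hu0x0 j))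
  have hx0h : ∀ i, x0 i ≤ h i := by
    intro i
    refine Finset.sup_le fun j _ => ?_
    obtain ⟨sv, hsv⟩ := hsreal j
    obtain ⟨hi, hhi⟩ := WithBot.ne_bot_iff_exists.1 (hh i)
    by_cases hkbot : kstar B i j = ⊥
    · show kstar B i j + u0 j ≤ h i
      rw [hkbot, WithBot.bot_add]
      exact bot_le
    · obtain ⟨b, hkb'⟩ := WithBot.ne_bot_iff_exists.1 hkbot
      have hkb : kstar B i j = ((b : ℝ) : WithBot ℝ) := hkb'.symm
      have h1 : ((b - hi : ℝ) : WithBot ℝ) ≤ s j := by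
        calc ((b - hi : ℝ) : WithBot ℝ) = ((-hi : ℝ) : WithBot ℝ) + ((b : ℝ) : WithBot ℝ) := by
              rw [← WithBot.coe_add]; congr 1; ring
          _ = tinv (h i) + kstar B i j := by rw [← hhi, tinv_coe, hkb]
          _ ≤ s j := Finset.le_sup (f := fun r => tinv (h r) + kstar B r j) (Finset.mem_univ i)
      rw [hsv, WithBot.coe_le_coe] at h1
      show kstar B i j + u0 j ≤ h i
      rw [hkb, hu0def]
      show ((b : ℝ) : WithBot ℝ) + tinv (s j) ≤ h i
      rw [hsv, tinv_coe, ← WithBot.coe_add, ← hhi, WithBot.coe_le_coe]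
      linarith
  have hgx0 : ∀ i, g i ≤ x0 i := fun i => le_trans (hgu0 i) (hu0x0 i)
  have hx0feas : ∀ i, g i ≤ x0 i ∧ x0 i ≤ h i := fun i => ⟨hgx0 i, hx0h i⟩
  have hx0eq : cdot x0 (mulVec A x0) = θ := by
    refine le_antisymm ?_ (LB x0 hx0reg hx0feas)
    exact (hEquiv x0 hx0reg).1 (fun i => hXle u0 i)
  constructor
  · constructor
    · exact ⟨x0, hx0reg, hx0feas, hx0eq⟩
    · rintro v ⟨x, hx, hf, rfl⟩
      exact LB x hx hf
  · intro x hx hf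
    constructor
    · -- equality → decomposition
      intro heq
      have hBx : ∀ i, mulVec B x i ≤ x i := (hEquiv x hx).2 heq.le
      have hfix := hFix x hBx
      refine ⟨x, hfix.symm, fun j => ⟨(hf j).1, ?_⟩⟩
      obtain ⟨sv, hsv⟩ := hsreal j
      obtain ⟨c, hcj⟩ := WithBot.ne_bot_iff_exists.1 (hx j)
      have hentry : ∀ r, kstar B r j + x j ≤ h r := by
        intro r
        calc kstar B r j + x j
            ≤ mulVec (kstar B) x r :=
              Finset.le_sup (f := fun j => kstar B r j + x j) (Finset.mem_univ j)
          _ = x r := by rw [hfix]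
          _ ≤ h r := (hf r).2
      have hsle : s j ≤ ((-c : ℝ) : WithBot ℝ) := by
        rw [hsdef]
        refine Finset.sup_le fun r _ => ?_
        obtain ⟨hr, hhr⟩ := WithBot.ne_bot_iff_exists.1 (hh r)
        have := hentry r
        rw [← hcj, ← hhr] at this
        rw [← hhr, tinv_coe]
        exact shift_le_helper hr c _ this
      rw [hsv, WithBot.coe_le_coe] at hsle
      rw [← hcj]
      show ((c : ℝ) : WithBot ℝ) ≤ tinv (s j)
      rw [hsv, tinv_coe, WithBot.coe_le_coe]
      linarith
    · -- decomposition → equality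
      rintro ⟨u, rfl, _⟩
      refine le_antisymm ?_ (LB _ hx hf)
      exact (hEquiv _ hx).1 (fun i => hXle u i)
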